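/- arXiv:2605.17502 — 2 statements merged into one kernel-verified Lean document; each statement's English description precedes it below -/
import Mathlib

section
/- Let d ≥ 2 and let L be a real-linear map on d×d real matrices which preserves symmetric matrices and is isotropic, i.e. L(Q S Qᵀ) = Q·(L S)·Qᵀ for every orthogonal matrix Q and every symmetric matrix S. Then there exist real constants μ and λ (shear and bulk moduli) such that L(S) = 2μ·S + λ·(trace S)·I for every symmetric d×d matrix S. (An isotropic simple fluid therefore admits at most two independent viscosity coefficients, corresponding to the trace and trace-free parts of the rate-of-strain tensor.) -/
open Matrix

namespace IsotropicAux

variable {d : ℕ}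

lemma perm_transpose (σ : Equiv.Perm (Fin d)) :
    (σ.toPEquiv.toMatrix : Matrix (Fin d) (Fin d) ℝ)ᵀ = σ.symm.toPEquiv.toMatrix := by
  rw [Equiv.toPEquiv_symm, PEquiv.toMatrix_symm]

lemma perm_conj (σ : Equiv.Perm (Fin d)) (M : Matrix (Fin d) (Fin d) ℝ) :
    σ.toPEquiv.toMatrix * M * (σ.toPEquiv.toMatrix : Matrix (Fin d) (Fin d) ℝ)ᵀ
      = M.submatrix σ σ := by
  rw [perm_transpose, PEquiv.toMatrix_toPEquiv_mul, PEquiv.mul_toMatrix_toPEquiv,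
    Equiv.symm_symm]
  rfl

lemma perm_orth (σ : Equiv.Perm (Fin d)) :
    (σ.toPEquiv.toMatrix : Matrix (Fin d) (Fin d) ℝ)ᵀ * σ.toPEquiv.toMatrix = 1 := by
  rw [perm_transpose, PEquiv.toMatrix_toPEquiv_mul]
  ext i j
  simp [PEquiv.toMatrix_toPEquiv_eq, Matrix.one_apply, Matrix.submatrix_apply,
    Equiv.toPEquiv_apply, Equiv.apply_symm_apply]

lemma submatrix_diag (σ : Equiv.Perm (Fin d)) (v : Fin d → ℝ) :
    (diagonal v).submatrix σ σ = diagonal (v ∘ σ) := by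
  ext i j
  by_cases h : i = j
  · simp [h]
  · simp [Matrix.diagonal_apply_ne _ h, Matrix.diagonal_apply_ne,
      fun hc : σ i = σ j => h (σ.injective hc), h]

end IsotropicAux

open IsotropicAux in
/-- An isotropic linear constitutive law on `d×d` matrices (`d ≥ 2`) that preserves
symmetric matrices and is equivariant under conjugation by the orthogonal group is of the
form `S ↦ 2μ S + λ (tr S) I` on symmetric matrices: an isotropic simple fluid admits at
most two independent viscosity coefficients. -/
theorem isotropic_constitutive_law_two_moduli {d : ℕ} (hd : 2 ≤ d)
    (L : Matrix (Fin d) (Fin d) ℝ →ₗ[ℝ] Matrix (Fin d) (Fin d) ℝ)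
    (hsym : ∀ S : Matrix (Fin d) (Fin d) ℝ, Sᵀ = S → (L S)ᵀ = L S)
    (hiso : ∀ Q S : Matrix (Fin d) (Fin d) ℝ, Qᵀ * Q = 1 → Sᵀ = S →
      L (Q * S * Qᵀ) = Q * L S * Qᵀ) :
    ∃ μ lam : ℝ, ∀ S : Matrix (Fin d) (Fin d) ℝ, Sᵀ = S →
      L S = (2 * μ) • S + (lam * Matrix.trace S) • (1 : Matrix (Fin d) (Fin d) ℝ) := by
  classical
  let i0 : Fin d := ⟨0, by omega⟩
  let i1 : Fin d := ⟨1, by omega⟩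
  have h01 : i0 ≠ i1 := Fin.ne_of_val_ne (by norm_num)
  set M := L (diagonal (Pi.single i0 (1:ℝ))) with hMdef
  -- M is fixed by conjugation with permutation matrices fixing the single
  have hperm : ∀ σ : Equiv.Perm (Fin d), σ i0 = i0 → M = M.submatrix σ σ := by
    intro σ hσ
    have hconj : σ.toPEquiv.toMatrix * diagonal (Pi.single i0 (1:ℝ)) * (σ.toPEquiv.toMatrix : Matrix (Fin d) (Fin d) ℝ)ᵀ = diagonal (Pi.single i0 (1:ℝ)) := by
      have hfun : Pi.single i0 (1:ℝ) ∘ σ = Pi.single i0 1 := by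
        funext x
        simp only [Function.comp_apply, Pi.single_apply]
        by_cases hx : x = i0
        · simp [hx, hσ]
        · have : σ x ≠ i0 := fun hc => hx (by
            have := σ.injective (hc.trans hσ.symm); exact this)
          simp [hx, this]
      rw [perm_conj, submatrix_diag, hfun]
    have := hiso (σ.toPEquiv.toMatrix) (diagonal (Pi.single i0 (1:ℝ))) (perm_orth σ) (diagonal_transpose (Pi.single i0 (1:ℝ)))
    rw [hconj, ← hMdef, perm_conj] at this
    exact this
  -- off-diagonal entries of M vanish
  have hdiagM : ∀ i j : Fin d, i ≠ j → M i j = 0 := by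
    intro i j hij
    set ε : Fin d → ℝ := fun m => if m = i then (-1 : ℝ) else 1 with hε
    have hε2 : ∀ m, ε m * ε m = 1 := by
      intro m; by_cases h : m = i <;> simp [hε, h]
    have horth : (diagonal ε)ᵀ * diagonal ε = 1 := by
      rw [diagonal_transpose, diagonal_mul_diagonal]
      simp only [hε2]
      exact diagonal_one
    have hfix : diagonal ε * diagonal (Pi.single i0 (1:ℝ)) * (diagonal ε)ᵀ = diagonal (Pi.single i0 (1:ℝ)) := by
      have hfun : (fun m : Fin d => ε m * (Pi.single i0 (1:ℝ) : Fin d → ℝ) m * ε m) = Pi.single i0 1 := by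
        funext m
        by_cases h : m = i0
        · subst h
          rw [Pi.single_eq_same, mul_one]
          exact hε2 i0
        · simp [Pi.single_eq_of_ne h]
      rw [diagonal_transpose, diagonal_mul_diagonal, diagonal_mul_diagonal, hfun]
    have key := hiso (diagonal ε) (diagonal (Pi.single i0 (1:ℝ))) horth (diagonal_transpose (Pi.single i0 (1:ℝ)))
    rw [hfix, ← hMdef, diagonal_transpose] at key
    have hentry : M i j = ε i * M i j * ε j := by
      conv_lhs => rw [key]
      rw [Matrix.mul_diagonal, Matrix.diagonal_mul]
    have hεi : ε i = -1 := by simp [hε]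
    have hεj : ε j = 1 := by simp [hε, (Ne.symm hij)]
    rw [hεi, hεj] at hentry
    linarith
  set a := M i0 i0 with ha
  set b := M i1 i1 with hb
  -- all non-i0 diagonal entries equal b
  have hMb : ∀ k : Fin d, k ≠ i0 → M k k = b := by
    intro k hk
    by_cases hk1 : k = i1
    · rw [hk1]
    · have hσ : (Equiv.swap i1 k) i0 = i0 :=
        Equiv.swap_apply_of_ne_of_ne h01 (Ne.symm hk)
      have := hperm (Equiv.swap i1 k) hσ
      have h2 : M i1 i1 = M (Equiv.swap i1 k i1) (Equiv.swap i1 k i1) := by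
        conv_lhs => rw [this]
        rfl
      rw [Equiv.swap_apply_left] at h2
      exact h2.symm
  have hM : M = (a - b) • diagonal (Pi.single i0 (1:ℝ)) + b • (1 : Matrix (Fin d) (Fin d) ℝ) := by
    ext i j
    by_cases hij : i = j
    · subst hij
      by_cases h0 : i = i0
      · subst h0
        simp [Matrix.one_apply, Pi.single_apply, ← ha]
        try ring
      · rw [hMb i h0]
        simp [Matrix.one_apply, Pi.single_apply, h0]
    · rw [hdiagM i j hij]
      simp [Matrix.one_apply, Pi.single_apply, hij, Matrix.diagonal_apply_ne]
  -- value of L on each diagonal basis matrix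
  have hLE : ∀ i : Fin d, L (diagonal (Pi.single i (1:ℝ))) = (a - b) • diagonal (Pi.single i (1:ℝ)) + b • (1 : Matrix (Fin d) (Fin d) ℝ) := by
    intro i
    set σ := Equiv.swap i0 i with hσdef
    have hconj : σ.toPEquiv.toMatrix * diagonal (Pi.single i0 (1:ℝ)) * (σ.toPEquiv.toMatrix : Matrix (Fin d) (Fin d) ℝ)ᵀ = diagonal (Pi.single i (1:ℝ)) := by
      have hfun : Pi.single i0 (1:ℝ) ∘ σ = Pi.single i 1 := by
        funext x
        simp only [Function.comp_apply, Pi.single_apply]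
        by_cases hx : x = i
        · simp [hx, hσdef, Equiv.swap_apply_right]
        · have : σ x ≠ i0 := by
            intro hc
            apply hx
            have : σ (σ x) = σ i0 := by rw [hc]
            simpa [hσdef, Equiv.swap_apply_left] using this
          simp [hx, this]
      rw [perm_conj, submatrix_diag, hfun]
    have key := hiso (σ.toPEquiv.toMatrix) (diagonal (Pi.single i0 (1:ℝ))) (perm_orth σ) (diagonal_transpose (Pi.single i0 (1:ℝ)))
    rw [hconj, ← hMdef, perm_conj, hM] at key
    rw [key]
    ext x y
    by_cases hxy : x = y
    · subst hxy
      by_cases hx : x = i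
      · subst hx
        simp [Matrix.submatrix_apply, Matrix.one_apply, Pi.single_apply,
          hσdef, Equiv.swap_apply_right]
      · have hσx : σ x ≠ i0 := by
          intro hc
          apply hx
          have : σ (σ x) = σ i0 := by rw [hc]
          simpa [hσdef, Equiv.swap_apply_left] using this
        simp [Matrix.submatrix_apply, Matrix.one_apply, Pi.single_apply, hx, hσx]
    · have : σ x ≠ σ y := fun hc => hxy (σ.injective hc)
      simp [Matrix.submatrix_apply, Matrix.one_apply, Pi.single_apply, hxy, this,
        Matrix.diagonal_apply_ne]
  -- value of L on diagonal matrices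
  have hLdiag : ∀ v : Fin d → ℝ,
      L (diagonal v) = (a - b) • diagonal v + (b * ∑ i, v i) • (1 : Matrix (Fin d) (Fin d) ℝ) := by
    intro v
    have hdv : diagonal v = ∑ i, v i • diagonal (Pi.single i (1:ℝ)) := by
      ext x y
      by_cases hxy : x = y
      · subst hxy
        simp [Matrix.sum_apply, Matrix.diagonal_apply, Pi.single_apply]
      · simp [Matrix.sum_apply, Matrix.diagonal_apply_ne _ hxy, hxy]
    rw [hdv, map_sum]
    simp only [_root_.map_smul, hLE]
    have hterm : ∀ i : Fin d, v i • ((a - b) • diagonal (Pi.single i (1:ℝ))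
        + b • (1 : Matrix (Fin d) (Fin d) ℝ))
        = (a - b) • (v i • diagonal (Pi.single i (1:ℝ))) + (v i * b) • (1 : Matrix (Fin d) (Fin d) ℝ) := by
      intro i
      rw [smul_add, smul_smul, smul_smul, smul_smul, mul_comm]
    rw [Finset.sum_congr rfl (fun i _ => hterm i), Finset.sum_add_distrib,
      ← Finset.smul_sum, ← hdv, ← Finset.sum_smul]
    congr 1
    rw [← Finset.sum_mul, mul_comm]
  refine ⟨(a - b) / 2, b, ?_⟩
  intro S hS
  have hHerm : S.IsHermitian := by
    rw [Matrix.IsHermitian, Matrix.conjTranspose_eq_transpose_of_trivial, hS]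
  have hspec := hHerm.spectral_theorem
  set U : Matrix (Fin d) (Fin d) ℝ := (hHerm.eigenvectorUnitary : Matrix (Fin d) (Fin d) ℝ) with hU
  set v : Fin d → ℝ := hHerm.eigenvalues with hv
  have hDstar : (star U : Matrix (Fin d) (Fin d) ℝ) = Uᵀ := by
    rw [Matrix.star_eq_conjTranspose, Matrix.conjTranspose_eq_transpose_of_trivial]
  have hDform : diagonal ((RCLike.ofReal : ℝ → ℝ) ∘ v) = diagonal v := by
    congr 1
  have hspec' : S = U * diagonal v * Uᵀ := by
    rw [hspec, Unitary.conjStarAlgAut_apply, ← hU, hDstar, hDform]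
  have hUorth : Uᵀ * U = 1 := by
    rw [← hDstar]
    exact (Matrix.mem_unitaryGroup_iff').mp hHerm.eigenvectorUnitary.2
  have hUUt : U * Uᵀ = 1 := by
    rw [← hDstar]
    exact (Matrix.mem_unitaryGroup_iff).mp hHerm.eigenvectorUnitary.2
  have hDsym : (diagonal v)ᵀ = diagonal v := diagonal_transpose v
  have key := hiso U (diagonal v) hUorth hDsym
  rw [← hspec', hLdiag] at key
  have htr : Matrix.trace S = ∑ i, v i := by
    rw [hspec', Matrix.trace_mul_cycle, hUorth, one_mul, Matrix.trace_diagonal]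
  rw [key, htr]
  rw [Matrix.mul_add, Matrix.add_mul]
  congr 1
  · rw [mul_div_cancel₀ _ (two_ne_zero)]
    rw [Matrix.mul_smul, Matrix.smul_mul, hspec']
  · rw [Matrix.mul_smul, Matrix.smul_mul, mul_one, hUUt]
end

section
/- Let u : ℝ × ℝᵈ → ℝᵈ be continuously differentiable and divergence-free in the space variable, i.e. Σₐ ∂ₐuₐ(t,x) = 0 for all (t,x), and let φ : ℝ × ℝᵈ → ℝᵈ be twice continuously differentiable with φ(0,x) = x and ∂ₜφ(t,x) = u(t, φ(t,x)) for all (t,x). Then the flow is volume preserving: det((Dₓφ)(t,x₀)) = 1 for all t ∈ ℝ and x₀ ∈ ℝᵈ, where Dₓφ denotes the spatial Jacobian of φ(t,·). (This is the Lagrangian statement that an incompressible flow transports volume elements without change, the basis of mass conservation ρ dᵈx = const along particle paths.) -/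
open Matrix Finset

noncomputable def detCMM (d : ℕ) : ContinuousMultilinearMap ℝ (fun _ : Fin d => (Fin d → ℝ)) ℝ :=
  MultilinearMap.mkContinuous
    (Matrix.detRowAlternating : ((Fin d → ℝ) [⋀^Fin d]→ₗ[ℝ] ℝ)).toMultilinearMap
    (d.factorial : ℝ) (by
      intro m
      have hd : (Matrix.detRowAlternating : ((Fin d → ℝ) [⋀^Fin d]→ₗ[ℝ] ℝ)).toMultilinearMap m
          = Matrix.det (Matrix.of m) := rfl
      rw [hd, Matrix.det_apply]
      refine (norm_sum_le _ _).trans ?_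
      have h1 : ∀ σ : Equiv.Perm (Fin d),
          ‖Equiv.Perm.sign σ • ∏ i, Matrix.of m (σ i) i‖ ≤ ∏ i, ‖m i‖ := by
        intro σ
        have he : ‖Equiv.Perm.sign σ • ∏ i, Matrix.of m (σ i) i‖ = ‖∏ i, m (σ i) i‖ := by
          rcases Int.units_eq_one_or (Equiv.Perm.sign σ) with h | h <;> simp [h, Matrix.of_apply]
        rw [he]
        calc ‖∏ i, m (σ i) i‖ ≤ ∏ i, ‖m (σ i) i‖ := norm_prod_le _ _
          _ ≤ ∏ i, ‖m (σ i)‖ :=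
              Finset.prod_le_prod (fun i _ => norm_nonneg _) (fun i _ => norm_le_pi_norm _ _)
          _ = ∏ i, ‖m i‖ := Equiv.prod_comp σ (fun i => ‖m i‖)
      refine (Finset.sum_le_sum fun σ _ => h1 σ).trans ?_
      rw [Finset.sum_const, Finset.card_univ, Fintype.card_perm]
      simp [nsmul_eq_mul])

lemma detCMM_apply {d : ℕ} (m : Fin d → (Fin d → ℝ)) : detCMM d m = Matrix.det (Matrix.of m) := rfl

lemma sum_det_update {d : ℕ} (R C : Matrix (Fin d) (Fin d) ℝ) :
    ∑ j, (R.updateRow j ((R * Cᵀ) j)).det = R.det * C.trace := by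
  have h1 : ∀ (j : Fin d) (v : Fin d → ℝ),
      (R.updateRow j v).det = ∑ k, (R.adjugate) k j * v k := by
    intro j v
    rw [← Matrix.cramer_transpose_apply, Matrix.cramer_eq_adjugate_mulVec,
      ← Matrix.adjugate_transpose]
    simp [Matrix.mulVec, dotProduct, Matrix.transpose_apply, mul_comm]
  calc ∑ j, (R.updateRow j ((R * Cᵀ) j)).det
      = ∑ j, ∑ k, R.adjugate k j * (R * Cᵀ) j k := by simp [h1]
    _ = Matrix.trace (R * Cᵀ * R.adjugate) := by
        rw [Matrix.trace]
        simp [Matrix.diag, Matrix.mul_apply, mul_comm]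
    _ = Matrix.trace (R.adjugate * R * Cᵀ) := by
        rw [Matrix.trace_mul_cycle, Matrix.mul_assoc]
    _ = R.det * C.trace := by
        rw [Matrix.adjugate_mul]
        simp [Matrix.smul_mul, Matrix.trace_smul, Matrix.trace_transpose, smul_eq_mul]

/-- The flow of a divergence-free `C¹` velocity field is volume preserving: the Jacobian
determinant of the flow map equals `1` at all times. This is the Lagrangian statement
that an incompressible flow transports volume elements without change, the basis of mass
conservation `ρ dᵈx = const` along particle paths. -/
theorem incompressible_flow_is_volume_preserving {d : ℕ}
    (u : ℝ × (Fin d → ℝ) → (Fin d → ℝ))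
    (φ : ℝ × (Fin d → ℝ) → (Fin d → ℝ))
    (hu : ContDiff ℝ 1 u) (hφ : ContDiff ℝ 2 φ)
    (hdiv : ∀ (t : ℝ) (x : Fin d → ℝ),
      ∑ a, fderiv ℝ (fun y => u (t, y)) x (Pi.single a 1) a = 0)
    (hinit : ∀ x, φ (0, x) = x)
    (hflow : ∀ (t : ℝ) (x : Fin d → ℝ),
      HasDerivAt (fun τ => φ (τ, x)) (u (t, φ (t, x))) t) :
    ∀ (t : ℝ) (x₀ : Fin d → ℝ),
      LinearMap.det (fderiv ℝ (fun x => φ (t, x)) x₀).toLinearMap = 1 := by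
  classical
  intro t₀ x₀
  have hφ1 : ContDiff ℝ 1 φ := hφ.of_le one_le_two
  have hφd : ∀ p : ℝ × (Fin d → ℝ), HasFDerivAt φ (fderiv ℝ φ p) p :=
    fun p => (hφ1.differentiable one_ne_zero p).hasFDerivAt
  set G : ℝ × (Fin d → ℝ) → (ℝ × (Fin d → ℝ)) →L[ℝ] (Fin d → ℝ) := fderiv ℝ φ with hGdef
  have hG : ContDiff ℝ 1 G := hφ.fderiv_right (le_refl 2)
  have hGd : ∀ p, HasFDerivAt G (fderiv ℝ G p) p :=
    fun p => (hG.differentiable one_ne_zero p).hasFDerivAt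
  have hslice : ∀ t x, HasFDerivAt (fun y => φ (t, y))
      ((G (t, x)).comp (ContinuousLinearMap.inr ℝ ℝ (Fin d → ℝ))) x :=
    fun t x => (hφd (t, x)).comp x (hasFDerivAt_prodMk_right t x)
  set M : ℝ → (Fin d → ℝ) →L[ℝ] (Fin d → ℝ) :=
    fun t => (G (t, x₀)).comp (ContinuousLinearMap.inr ℝ ℝ (Fin d → ℝ)) with hMdef
  have hMfderiv : ∀ t, fderiv ℝ (fun x => φ (t, x)) x₀ = M t := fun t => (hslice t x₀).fderiv
  have hGu : ∀ (t : ℝ) (x : Fin d → ℝ), G (t, x) (1, 0) = u (t, φ (t, x)) := by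
    intro t x
    have h1 : HasDerivAt (fun τ => φ (τ, x)) (G (t, x) (1, 0)) t := by
      have := (hφd (t, x)).comp_hasDerivAt t ((hasDerivAt_id t).prodMk (hasDerivAt_const t x))
      simpa [Function.comp_def] using this
    exact h1.unique (hflow t x)
  have hud : ∀ (t : ℝ) (z : Fin d → ℝ), DifferentiableAt ℝ (fun y => u (t, y)) z := by
    intro t z
    exact ((hu.differentiable one_ne_zero) (t, z)).comp z
      (hasFDerivAt_prodMk_right t z).differentiableAt
  set B : ℝ → (Fin d → ℝ) →L[ℝ] (Fin d → ℝ) :=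
    fun t => fderiv ℝ (fun y => u (t, y)) (φ (t, x₀)) with hBdef
  have hM' : ∀ t, HasDerivAt M ((B t).comp (M t)) t := by
    intro t
    have hc : HasDerivAt (fun τ => G (τ, x₀)) (fderiv ℝ G (t, x₀) (1, 0)) t := by
      have := (hGd (t, x₀)).comp_hasDerivAt t ((hasDerivAt_id t).prodMk (hasDerivAt_const t x₀))
      simpa [Function.comp_def] using this
    have hM : HasDerivAt M
        ((fderiv ℝ G (t, x₀) (1, 0)).comp (ContinuousLinearMap.inr ℝ ℝ (Fin d → ℝ))) t := by
      simpa using hc.clm_comp (hasDerivAt_const t (ContinuousLinearMap.inr ℝ ℝ (Fin d → ℝ)))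
    have key : (fderiv ℝ G (t, x₀) (1, 0)).comp (ContinuousLinearMap.inr ℝ ℝ (Fin d → ℝ))
        = (B t).comp (M t) := by
      refine ContinuousLinearMap.ext fun v => ?_
      have hsymm := second_derivative_symmetric (f := φ) hφd (hGd (t, x₀)) (0, v) (1, 0)
      have hGslice : HasFDerivAt (fun x => G (t, x))
          ((fderiv ℝ G (t, x₀)).comp (ContinuousLinearMap.inr ℝ ℝ (Fin d → ℝ))) x₀ :=
        (hGd (t, x₀)).comp x₀ (hasFDerivAt_prodMk_right t x₀)
      have h1 : HasFDerivAt (fun x => G (t, x) (1, 0))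
          (((fderiv ℝ G (t, x₀)).comp (ContinuousLinearMap.inr ℝ ℝ (Fin d → ℝ))).flip (1, 0)) x₀ := by
        simpa using hGslice.clm_apply (hasFDerivAt_const ((1 : ℝ), (0 : Fin d → ℝ)) x₀)
      have h2 : HasFDerivAt (fun x => u (t, φ (t, x))) ((B t).comp (M t)) x₀ :=
        by have := ((hud t (φ (t, x₀))).hasFDerivAt).comp x₀ (hslice t x₀); exact this
      have heq : (fun x => G (t, x) (1, 0)) = (fun x => u (t, φ (t, x))) :=
        funext fun x => hGu t x
      have h3 := (heq ▸ h1).unique h2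
      have h4 : fderiv ℝ G (t, x₀) (0, v) (1, 0) = ((B t).comp (M t)) v := by
        have := congrArg (fun (L : (Fin d → ℝ) →L[ℝ] (Fin d → ℝ)) => L v) h3
        simpa using this
      simpa [hsymm] using h4
    exact key ▸ hM
  set g : ℝ → Fin d → (Fin d → ℝ) := fun t j => M t (Pi.single j 1) with hgdef
  have hg' : ∀ t j, HasDerivAt (fun τ => g τ j) (B t (g t j)) t := by
    intro t j
    simpa using (hM' t).clm_apply (hasDerivAt_const t (Pi.single j 1))
  set J : ℝ → ℝ := fun t => detCMM d (g t) with hJdef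
  have hJ' : ∀ t, HasDerivAt J 0 t := by
    intro t
    have hF := HasFDerivAt.multilinear_comp (detCMM d)
      (g := fun j τ => g τ j)
      (g' := fun j => (1 : ℝ →L[ℝ] ℝ).smulRight (B t (g t j))) (x := t)
      (fun j => (hg' t j).hasFDerivAt)
    have hD : HasDerivAt J
        (∑ j, detCMM d (Function.update (g t) j (B t (g t j)))) t := by
      have := hF.hasDerivAt
      simpa [ContinuousMultilinearMap.toContinuousLinearMap] using this
    have hzero : (∑ j, detCMM d (Function.update (g t) j (B t (g t j)))) = 0 := by
      set R : Matrix (Fin d) (Fin d) ℝ := Matrix.of (g t) with hRdef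
      set C : Matrix (Fin d) (Fin d) ℝ := Matrix.of (fun i k => B t (Pi.single k 1) i) with hCdef
      have hBg : ∀ j, B t (g t j) = (R * Cᵀ) j := by
        intro j
        funext i
        have hexp : g t j = ∑ k, (g t j) k • (Pi.single k 1 : Fin d → ℝ) := by
          funext i'
          rw [Finset.sum_apply]
          simp [Pi.single_apply]
        rw [hexp]
        simp [Matrix.mul_apply, Matrix.transpose_apply, hRdef, hCdef, mul_comm,
          map_sum, Finset.sum_apply]
      have hupd : ∀ j, detCMM d (Function.update (g t) j (B t (g t j)))
          = (R.updateRow j ((R * Cᵀ) j)).det := by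
        intro j
        rw [hBg j]
        rfl
      rw [Finset.sum_congr rfl (fun j _ => hupd j), sum_det_update]
      have htr : C.trace = 0 := by
        rw [Matrix.trace]
        simpa [Matrix.diag, hCdef, hBdef] using hdiv t (φ (t, x₀))
      rw [htr, mul_zero]
    rw [← hzero]; exact hD
  have hJdet : ∀ t, J t = LinearMap.det (fderiv ℝ (fun x => φ (t, x)) x₀).toLinearMap := by
    intro t
    rw [hMfderiv t, ← LinearMap.det_toMatrix' ]
    have hmat : LinearMap.toMatrix' ((M t : (Fin d → ℝ) →L[ℝ] (Fin d → ℝ)) :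
        (Fin d → ℝ) →ₗ[ℝ] (Fin d → ℝ)) = (Matrix.of (g t))ᵀ := by
      ext i j
      rw [LinearMap.toMatrix'_apply]
      have hone : (fun j' => if j' = j then (1:ℝ) else 0) = (Pi.single j 1 : Fin d → ℝ) := by
        funext j'; simp [Pi.single_apply]
      simp only [Matrix.transpose_apply, Matrix.of_apply, hgdef, ContinuousLinearMap.coe_coe, hone]
    rw [hmat, Matrix.det_transpose]
    rfl
  have hconst : J t₀ = J 0 :=
    is_const_of_deriv_eq_zero (fun t => (hJ' t).differentiableAt)
      (fun t => (hJ' t).deriv) t₀ 0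
  have h0 : J 0 = 1 := by
    rw [hJdet 0]
    have hid : (fun x : Fin d → ℝ => φ (0, x)) = id := funext hinit
    rw [hid, fderiv_id]
    simp
  rw [← hJdet t₀, hconst, h0]
end
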